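/- Every subset Λ ⊆ Σ_A is a shift space if and only if Λ = X_F for some set of forbidden words F ⊆ ⋃_{k≥1} A^k, where X_F = X_F^inf ∪ X_F^fin with X_F^inf the infinite sequences avoiding all words of F as subblocks and X_F^fin the finite words x such that xay ∈ X_F^inf for infinitely many a ∈ A (with suitable y ∈ A^ℕ). -/

import Mathlib

open Set Filter Topology

/-- Elements of the full shift `Σ_A`: `Option`-valued sequences that stay `none`
once they are `none` (so they are either everywhere-defined infinite sequences,
or finite words followed by `none`s; the empty word is the all-`none` sequence). -/
def IsWordFun {A : Type*} (x : ℕ → Option A) : Prop :=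
  ∀ m n : ℕ, m ≤ n → x m = none → x n = none

/-- The full shift `Σ_A = A^ℕ ∪ {finite words over A}`. -/
def FullShift (A : Type*) : Type _ := {x : ℕ → Option A // IsWordFun x}

namespace FullShift

variable {A B : Type*}

/-- The length of an element of the full shift, in `ℕ∞`. -/
noncomputable def len (x : FullShift A) : ℕ∞ :=
  sInf {n : ℕ∞ | ∃ m : ℕ, n = (m : ℕ∞) ∧ x.1 m = none}

/-- The shift map `σ`, deleting the first letter. -/
def shift (x : FullShift A) : FullShift A :=
  ⟨fun n => x.1 (n + 1), fun m n h hm => x.2 (m + 1) (n + 1) (by omega) hm⟩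

/-- The empty word `∅`. -/
def emptyWord : FullShift A := ⟨fun _ => none, fun _ _ _ _ => rfl⟩

/-- The finite word determined by a list. -/
def word (l : List A) : FullShift A :=
  ⟨fun n => l[n]?, by
    intro m n h hm
    rw [List.getElem?_eq_none_iff] at hm ⊢
    omega⟩

/-- The infinite sequence determined by a function `ℕ → A`. -/
def infSeq (g : ℕ → A) : FullShift A :=
  ⟨fun n => some (g n), by intro m n _ hm; simp at hm⟩

/-- Generalized cylinder set `Z(w, F)`: elements beginning with the finite word `w`
whose next letter, if any, does not lie in the finite set `F`. -/
def Cyl (w : List A) (F : Finset A) : Set (FullShift A) :=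
  {y | (∀ i < w.length, y.1 i = w[i]?) ∧ ∀ a ∈ F, y.1 w.length ≠ some a}

/-- The topology on `Σ_A` generated by the generalized cylinder sets. -/
instance : TopologicalSpace (FullShift A) :=
  TopologicalSpace.generateFrom {S | ∃ (w : List A) (F : Finset A), S = Cyl w F}

/-- A shift space: closed, shift-invariant, with the infinite-extension property. -/
def IsShiftSpace (Λ : Set (FullShift A)) : Prop :=
  IsClosed Λ ∧ (∀ x ∈ Λ, shift x ∈ Λ) ∧
    ∀ x ∈ Λ, ∀ n : ℕ, len x = (n : ℕ∞) →
      {a : A | ∃ z ∈ Λ, (∀ i < n, z.1 i = x.1 i) ∧ z.1 n = some a}.Infinite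

/-- `u` occurs as a subblock of `x`. -/
def Occurs (u : List A) (x : FullShift A) : Prop :=
  ∃ i : ℕ, ∀ j < u.length, x.1 (i + j) = u[j]?

/-- The infinite sequences avoiding every word in `Fb` as a subblock. -/
def XinfL (Fb : Set (List A)) : Set (FullShift A) :=
  {x | (∀ n, x.1 n ≠ none) ∧ ∀ u ∈ Fb, ¬ Occurs u x}

/-- The shift space `X_F` determined by the forbidden words `Fb`: the infinite
sequences avoiding `Fb`, together with the finite words `x` such that for
infinitely many `a ∈ A` some extension `x a y` lies in `X_F^inf`. -/
def XL (Fb : Set (List A)) : Set (FullShift A) :=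
  XinfL Fb ∪ {x | ∃ n : ℕ, len x = (n : ℕ∞) ∧
    {a : A | ∃ z ∈ XinfL Fb, (∀ i < n, z.1 i = x.1 i) ∧ z.1 n = some a}.Infinite}

/-- The infinite sequences all of whose length-`N` windows `v` satisfy `ft v = true`
(i.e. avoiding all length-`N` words `w` with `ft w = 0`). -/
def XinfT {N : ℕ} (ft : (Fin N → A) → Bool) : Set (FullShift A) :=
  {x | (∀ n, x.1 n ≠ none) ∧
    ∀ (i : ℕ) (v : Fin N → A), (∀ j : Fin N, x.1 (i + (j : ℕ)) = some (v j)) → ft v = true}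

/-- The shift space `X_f` determined by forbidding the length-`N` words `w`
with `ft w = 0`. -/
def XT {N : ℕ} (ft : (Fin N → A) → Bool) : Set (FullShift A) :=
  XinfT ft ∪ {x | ∃ n : ℕ, len x = (n : ℕ∞) ∧
    {a : A | ∃ z ∈ XinfT ft, (∀ i < n, z.1 i = x.1 i) ∧ z.1 n = some a}.Infinite}

/-- `Y` is an `M`-step shift space: determined by forbidden words of length `M + 1`,
equivalently by a function `g̃ : B^{M+1} → {0,1}`. -/
def IsStepShift (M : ℕ) (Y : Set (FullShift B)) : Prop :=
  ∃ gt : (Fin (M + 1) → B) → Bool, Y = XT gt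

/-- `φ` is a conjugacy from `Λ` onto `Y`: bijective, continuous, shift-commuting
and length-preserving. -/
def IsConjugacy (Λ : Set (FullShift A)) (Y : Set (FullShift B))
    (φ : FullShift A → FullShift B) : Prop :=
  Set.BijOn φ Λ Y ∧ ContinuousOn φ Λ ∧
    (∀ x ∈ Λ, φ (shift x) = shift (φ x)) ∧ ∀ x ∈ Λ, len (φ x) = len x

/-- `Λ` and `Y` are conjugate shift spaces. -/
def Conjugate (Λ : Set (FullShift A)) (Y : Set (FullShift B)) : Prop :=
  ∃ φ : FullShift A → FullShift B, IsConjugacy Λ Y φ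

/-- The periodic sequence `(x_1 ⋯ x_M b)^∞` of period `M + 1`. -/
def per (M : ℕ) (x : Fin M → A) (b : A) : ℕ → A :=
  fun n => if h : n % (M + 1) < M then x ⟨n % (M + 1), h⟩ else b

end FullShift
namespace FullShift

variable {A : Type*}

lemma ne_none_of_le {x : FullShift A} {m n : ℕ} (h : m ≤ n) (hn : x.1 n ≠ none) :
    x.1 m ≠ none := fun hm => hn (x.2 m n h hm)

lemma len_eq_coe_of {x : FullShift A} {n : ℕ} (h1 : x.1 n = none)
    (h2 : ∀ k < n, x.1 k ≠ none) : len x = (n : ℕ∞) := by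
  refine le_antisymm (sInf_le ⟨n, rfl, h1⟩) (le_sInf ?_)
  rintro m ⟨k, rfl, hk⟩
  by_contra hlt
  push_neg at hlt
  have : k < n := by exact_mod_cast hlt
  exact h2 k this hk

lemma len_eq_top_iff {x : FullShift A} : len x = ⊤ ↔ ∀ n, x.1 n ≠ none := by
  constructor
  · intro h n hn
    have : len x ≤ (n : ℕ∞) := sInf_le ⟨n, rfl, hn⟩
    rw [h] at this
    exact (ENat.coe_lt_top n).not_ge this
  · intro h
    have : {n : ℕ∞ | ∃ m : ℕ, n = (m : ℕ∞) ∧ x.1 m = none} = ∅ := by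
      ext m; simp only [Set.mem_setOf_eq, Set.mem_empty_iff_false, iff_false]
      rintro ⟨k, rfl, hk⟩; exact h k hk
    rw [len, this, sInf_empty]

lemma len_eq_coe_iff {x : FullShift A} {n : ℕ} :
    len x = (n : ℕ∞) ↔ x.1 n = none ∧ ∀ k < n, x.1 k ≠ none := by
  classical
  refine ⟨fun h => ?_, fun h => len_eq_coe_of h.1 h.2⟩
  by_cases he : ∃ m, x.1 m = none
  · have hfind := Nat.find_spec he
    have h' : len x = (Nat.find he : ℕ∞) :=
      len_eq_coe_of hfind (fun k hk => Nat.find_min he hk)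
    rw [h] at h'
    have : n = Nat.find he := by exact_mod_cast h'
    subst this
    exact ⟨hfind, fun k hk => Nat.find_min he hk⟩
  · push_neg at he
    rw [len_eq_top_iff.2 (fun k hk => he k hk)] at h
    simp at h

lemma len_cases (x : FullShift A) : (∃ n : ℕ, len x = (n : ℕ∞)) ∨ ∀ n, x.1 n ≠ none := by
  classical
  by_cases he : ∃ m, x.1 m = none
  · exact Or.inl ⟨Nat.find he, len_eq_coe_of (Nat.find_spec he) (fun k hk => Nat.find_min he hk)⟩
  · push_neg at he; exact Or.inr he

end FullShift
namespace FullShift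

variable {A : Type*}

lemma mem_cyl_prefix {y : FullShift A} {w : List A} {F : Finset A} (h : y ∈ Cyl w F)
    {i : ℕ} (hi : i < w.length) : y.1 i = some w[i] := by
  rw [h.1 i hi, List.getElem?_eq_getElem hi]

open Classical in
lemma cyl_directed {y : FullShift A} {w1 w2 : List A} {F1 F2 : Finset A}
    (h1 : y ∈ Cyl w1 F1) (h2 : y ∈ Cyl w2 F2) :
    ∃ w3 F3, y ∈ Cyl w3 F3 ∧ Cyl w3 F3 ⊆ Cyl w1 F1 ∩ Cyl w2 F2 := by
  rcases lt_trichotomy w1.length w2.length with hlt | heq | hlt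
  · -- Cyl w2 F2 ⊆ Cyl w1 F1
    refine ⟨w2, F2, h2, fun z hz => ⟨⟨fun i hi => ?_, fun a ha hcon => ?_⟩, hz⟩⟩
    · rw [hz.1 i (hi.trans hlt), ← h2.1 i (hi.trans hlt), h1.1 i hi]
    · rw [hz.1 w1.length hlt, ← h2.1 w1.length hlt] at hcon
      exact h1.2 a ha hcon
  · -- same word
    have hw : w1 = w2 := by
      apply List.ext_getElem heq
      intro i hi1 hi2
      have := (mem_cyl_prefix h1 hi1).symm.trans (mem_cyl_prefix h2 hi2)
      exact Option.some_injective _ this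
    subst hw
    refine ⟨w1, F1 ∪ F2, ⟨h1.1, fun a ha => ?_⟩, fun z hz => ⟨⟨hz.1, fun a ha => hz.2 a (Finset.mem_union_left _ ha)⟩, ⟨hz.1, fun a ha => hz.2 a (Finset.mem_union_right _ ha)⟩⟩⟩
    rcases Finset.mem_union.1 ha with h | h
    · exact h1.2 a h
    · exact h2.2 a h
  · refine ⟨w1, F1, h1, fun z hz => ⟨hz, ⟨fun i hi => ?_, fun a ha hcon => ?_⟩⟩⟩
    · rw [hz.1 i (hi.trans hlt), ← h1.1 i (hi.trans hlt), h2.1 i hi]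
    · rw [hz.1 w2.length hlt, ← h1.1 w2.length hlt] at hcon
      exact h2.2 a ha hcon

lemma cyl_univ (y : FullShift A) : y ∈ Cyl ([] : List A) (∅ : Finset A) := by
  constructor
  · intro i hi; simp at hi
  · intro a ha; simp at ha

lemma mem_nhds_iff' {y : FullShift A} {U : Set (FullShift A)} :
    U ∈ 𝓝 y ↔ ∃ w F, y ∈ Cyl w F ∧ Cyl w F ⊆ U := by
  rw [TopologicalSpace.nhds_generateFrom]
  rw [Filter.mem_biInf_of_directed]
  · constructor
    · rintro ⟨s, ⟨hy, w, F, rfl⟩, hs⟩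
      exact ⟨w, F, hy, hs⟩
    · rintro ⟨w, F, hy, hs⟩
      exact ⟨Cyl w F, ⟨hy, w, F, rfl⟩, hs⟩
  · rintro s ⟨hy1, w1, F1, rfl⟩ t ⟨hy2, w2, F2, rfl⟩
    obtain ⟨w3, F3, hy3, hsub⟩ := cyl_directed hy1 hy2
    exact ⟨Cyl w3 F3, ⟨hy3, w3, F3, rfl⟩,
      le_principal_iff.2 (Filter.mem_principal.2 (fun z hz => (hsub hz).1)),
      le_principal_iff.2 (Filter.mem_principal.2 (fun z hz => (hsub hz).2))⟩
  · exact ⟨Cyl [] ∅, cyl_univ y, [], ∅, rfl⟩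

lemma mem_closure_iff' {y : FullShift A} {S : Set (FullShift A)} :
    y ∈ closure S ↔ ∀ w F, y ∈ Cyl w F → ∃ z ∈ S, z ∈ Cyl w F := by
  rw [mem_closure_iff_nhds]
  constructor
  · intro h w F hy
    obtain ⟨z, hz1, hz2⟩ := h (Cyl w F) (mem_nhds_iff'.2 ⟨w, F, hy, subset_rfl⟩)
    exact ⟨z, hz2, hz1⟩
  · intro h t ht
    obtain ⟨w, F, hy, hsub⟩ := mem_nhds_iff'.1 ht
    obtain ⟨z, hz1, hz2⟩ := h w F hy
    exact ⟨z, hsub hz2, hz1⟩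

end FullShift
namespace FullShift

variable {A : Type*}

lemma shift_iter_apply (x : FullShift A) (i j : ℕ) : (shift^[i] x).1 j = x.1 (i + j) := by
  induction i generalizing j with
  | zero => simp
  | succ i ih =>
    rw [Function.iterate_succ_apply']
    show (shift^[i] x).1 (j+1) = _
    have h2 : i + (j + 1) = i + 1 + j := by omega
    rw [ih (j+1), h2]

lemma exists_prefix_list (x : FullShift A) (L : ℕ) (h : ∀ j < L, x.1 j ≠ none) :
    ∃ u : List A, u.length = L ∧ ∀ j < L, u[j]? = x.1 j := by
  refine ⟨List.ofFn (fun j : Fin L => (x.1 j).get (Option.isSome_iff_ne_none.2 (h j j.2))), ?_, ?_⟩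
  · simp
  · intro j hj
    rw [List.getElem?_eq_getElem (by simpa using hj)]
    simp [List.getElem_ofFn]

lemma one_step {Λ : Set (FullShift A)} (hΛ : IsShiftSpace Λ) {x : FullShift A}
    (hx : x ∈ Λ) {n : ℕ} (hn : len x = (n : ℕ∞)) :
    ∃ z ∈ Λ, (∀ i < n, z.1 i = x.1 i) ∧ z.1 n ≠ none := by
  obtain ⟨a, z, hz, hag, hzn⟩ := (hΛ.2.2 x hx n hn).nonempty
  exact ⟨z, hz, hag, by simp [hzn]⟩

lemma exists_inf_ext {Λ : Set (FullShift A)} (hΛ : IsShiftSpace Λ) {x : FullShift A}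
    (hx : x ∈ Λ) {n : ℕ} (hn : len x = (n : ℕ∞)) :
    ∃ y ∈ Λ, (∀ i < n, y.1 i = x.1 i) ∧ ∀ i, y.1 i ≠ none := by
  classical
  have hstep : ∀ z : FullShift A, ∃ z', z ∈ Λ → z' ∈ Λ ∧
      (∀ i, z.1 i ≠ none → z'.1 i = z.1 i) ∧ (∀ m : ℕ, len z = (m : ℕ∞) → z'.1 m ≠ none) := by
    intro z
    by_cases hz : z ∈ Λ
    · rcases len_cases z with ⟨m, hm⟩ | hinf
      · obtain ⟨z', hz', hag, hne⟩ := one_step hΛ hz hm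
        refine ⟨z', fun _ => ⟨hz', fun i hi => ?_, fun m' hm' => ?_⟩⟩
        · have : i < m := by
            by_contra hge
            push_neg at hge
            exact hi (z.2 m i hge (len_eq_coe_iff.1 hm).1)
          exact hag i this
        · have h1 := hm.symm.trans hm'
          have : m = m' := by exact_mod_cast h1
          exact this ▸ hne
      · exact ⟨z, fun _ => ⟨hz, fun i _ => rfl, fun m hm =>
          absurd hm (by simp [len_eq_top_iff.2 hinf])⟩⟩
    · exact ⟨z, fun h => absurd h hz⟩
  choose f hf using hstep
  set g : ℕ → FullShift A := fun k => f^[k] x with hg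
  have hgsucc : ∀ k, g (k + 1) = f (g k) := fun k => Function.iterate_succ_apply' f k x
  have hmem : ∀ k, g k ∈ Λ := by
    intro k
    induction k with
    | zero => simpa [hg] using hx
    | succ k ih => rw [hgsucc]; exact (hf _ ih).1
  have hag1 : ∀ k i, (g k).1 i ≠ none → (g (k + 1)).1 i = (g k).1 i := by
    intro k i hi
    rw [hgsucc]
    exact (hf _ (hmem k)).2.1 i hi
  have hmono : ∀ k m, k ≤ m → ∀ i, (g k).1 i ≠ none → (g m).1 i = (g k).1 i := by
    intro k m hkm
    induction m, hkm using Nat.le_induction with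
    | base => intro i _; rfl
    | succ m hkm ih =>
      intro i hi
      have h1 := ih i hi
      have h2 : (g m).1 i ≠ none := by rw [h1]; exact hi
      rw [hag1 m i h2, h1]
  have hlen : ∀ k i, i < n + k → (g k).1 i ≠ none := by
    intro k
    induction k with
    | zero =>
      intro i hi
      have := (len_eq_coe_iff.1 hn).2 i (by omega)
      simpa [hg] using this
    | succ k ih =>
      intro i hi
      by_cases hik : (g k).1 i ≠ none
      · rw [hag1 k i hik]; exact hik
      · push_neg at hik
        have hieq : i = n + k := by
          by_contra hne
          exact (ih i (by omega)) hik
        subst hieq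
        have hlk : len (g k) = ((n + k : ℕ) : ℕ∞) := len_eq_coe_of hik ih
        rw [hgsucc]
        exact (hf _ (hmem k)).2.2 (n + k) hlk
  have hne : ∀ i, (g (i + 1)).1 i ≠ none := fun i => hlen (i + 1) i (by omega)
  set y : FullShift A := ⟨fun i => (g (i + 1)).1 i, fun m k h hm => absurd hm (hne m)⟩ with hy
  have hyval : ∀ m i, i < m → (g m).1 i = y.1 i := by
    intro m i him
    have : (g m).1 i = (g (i + 1)).1 i := hmono (i + 1) m (by omega) i (hne i)
    simpa [hy] using this
  have hyΛ : y ∈ Λ := by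
    rw [← hΛ.1.closure_eq]
    rw [mem_closure_iff']
    intro w F hyw
    refine ⟨g (w.length + 1), hmem _, fun i hi => ?_, fun a ha => ?_⟩
    · rw [hyval _ i (by omega)]; exact hyw.1 i hi
    · rw [hyval _ w.length (by omega)]; exact hyw.2 a ha
  refine ⟨y, hyΛ, fun i hi => ?_, fun i => ?_⟩
  · have h0 : (g 0).1 i ≠ none := by
      have := (len_eq_coe_iff.1 hn).2 i hi
      simpa [hg] using this
    have := hmono 0 (i + 1) (by omega) i h0
    simp only [hy]
    rw [this]
    simp [hg]
  · exact hne i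

end FullShift
namespace FullShift

variable {A : Type*}

lemma iter_mem {Λ : Set (FullShift A)} (hinv : ∀ x ∈ Λ, shift x ∈ Λ) {x : FullShift A}
    (hx : x ∈ Λ) (i : ℕ) : shift^[i] x ∈ Λ := by
  induction i with
  | zero => simpa using hx
  | succ i ih => rw [Function.iterate_succ_apply']; exact hinv _ ih

lemma shift_mem_XinfL {Fb : Set (List A)} {x : FullShift A} (hx : x ∈ XinfL Fb) :
    shift x ∈ XinfL Fb := by
  refine ⟨fun k => hx.1 (k + 1), fun u hu hocc => hx.2 u hu ?_⟩
  obtain ⟨i, hi⟩ := hocc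
  refine ⟨i + 1, fun j hj => ?_⟩
  have := hi j hj
  show x.1 (i + 1 + j) = u[j]?
  have he : i + 1 + j = i + j + 1 := by omega
  rw [he]
  exact this

/-- A finite `x` with infinitely many one-letter extensions inside `Λ` lies in `closure Λ`. -/
lemma mem_closure_of_ext {Λ : Set (FullShift A)} {x : FullShift A} {n : ℕ}
    (hn : len x = (n : ℕ∞))
    (hS : {a : A | ∃ z ∈ Λ, (∀ i < n, z.1 i = x.1 i) ∧ z.1 n = some a}.Infinite) :
    x ∈ closure Λ := by
  rw [mem_closure_iff']
  intro w F hxw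
  have hwn : w.length ≤ n := by
    by_contra hlt
    push_neg at hlt
    have := mem_cyl_prefix hxw (i := n) hlt
    rw [(len_eq_coe_iff.1 hn).1] at this
    cases this
  obtain ⟨a, ha, haF⟩ := hS.exists_notMem_finset F
  obtain ⟨z, hz, hag, hzn⟩ := ha
  refine ⟨z, hz, fun i hi => ?_, fun b hb => ?_⟩
  · rw [hag i (by omega)]; exact hxw.1 i hi
  · rcases eq_or_lt_of_le hwn with heq | hlt
    · rw [heq, hzn]
      intro hcon
      exact haF (by simpa using (Option.some_injective _ hcon) ▸ hb)
    · rw [hag w.length hlt]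
      exact hxw.2 b hb

/-- Infinite sequences avoiding the canonical forbidden set of `Λ` lie in `closure Λ`. -/
lemma inf_avoid_mem_closure {Λ : Set (FullShift A)}
    (hinv : ∀ x ∈ Λ, shift x ∈ Λ) {x : FullShift A} (hinf : ∀ k, x.1 k ≠ none)
    (havoid : ∀ u : List A, u ≠ [] → Occurs u x →
      ∃ p ∈ Λ, (∀ k, p.1 k ≠ none) ∧ Occurs u p) :
    x ∈ closure Λ := by
  rw [mem_closure_iff']
  intro w F hxw
  set L := w.length + 1 with hL
  obtain ⟨u, hul, hu⟩ := exists_prefix_list x L (fun j _ => hinf j)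
  have hune : u ≠ [] := by
    intro h
    rw [h] at hul
    simp [hL] at hul
  have hocc : Occurs u x := by
    refine ⟨0, fun j hj => ?_⟩
    rw [Nat.zero_add]
    exact (hu j (hul ▸ hj)).symm
  obtain ⟨p, hp, hpinf, i, hocc'⟩ := havoid u hune hocc
  refine ⟨shift^[i] p, iter_mem hinv hp i, fun j hj => ?_, fun b hb => ?_⟩
  · rw [shift_iter_apply, hocc' j (by omega), hu j (by omega)]
    exact hxw.1 j hj
  · rw [shift_iter_apply, hocc' w.length (by omega), hu w.length (by omega)]
    exact hxw.2 b hb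

end FullShift
namespace FullShift

variable {A : Type*}

lemma forward_dir {Λ : Set (FullShift A)} (hΛ : IsShiftSpace Λ) :
    ∃ Fb : Set (List A), (∀ u ∈ Fb, u ≠ []) ∧ Λ = XL Fb := by
  classical
  set Fb : Set (List A) :=
    {u | u ≠ [] ∧ ∀ p ∈ Λ, (∀ k, p.1 k ≠ none) → ¬ Occurs u p} with hFb
  have hXinf_sub : XinfL Fb ⊆ Λ := by
    intro x hx
    have hcl := inf_avoid_mem_closure (Λ := Λ) hΛ.2.1 hx.1 ?_
    · rwa [hΛ.1.closure_eq] at hcl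
    · intro u hune hocc
      by_contra hno
      push_neg at hno
      exact hx.2 u ⟨hune, fun p hp hpinf hpocc => (hno p hp hpinf) hpocc⟩ hocc
  refine ⟨Fb, fun u hu => hu.1, Set.Subset.antisymm ?_ ?_⟩
  · intro x hx
    rcases len_cases x with ⟨n, hn⟩ | hinf
    · refine Or.inr ⟨n, hn, Set.Infinite.mono ?_ (hΛ.2.2 x hx n hn)⟩
      rintro a ⟨z, hz, hag, hzn⟩
      rcases len_cases z with ⟨m, hm⟩ | hzinf
      · have hnm : n < m := by
          by_contra h
          push_neg at h
          rw [z.2 m n h (len_eq_coe_iff.1 hm).1] at hzn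
          cases hzn
        obtain ⟨y, hy, hyag, hyinf⟩ := exists_inf_ext hΛ hz hm
        refine ⟨y, ⟨hyinf, fun u hu hocc => hu.2 y hy hyinf hocc⟩, fun i hi => ?_, ?_⟩
        · rw [hyag i (by omega)]; exact hag i hi
        · rw [hyag n hnm]; exact hzn
      · exact ⟨z, ⟨hzinf, fun u hu hocc => hu.2 z hz hzinf hocc⟩, hag, hzn⟩
    · exact Or.inl ⟨hinf, fun u hu hocc => hu.2 x hx hinf hocc⟩
  · rintro x (hx | ⟨n, hn, hS⟩)
    · exact hXinf_sub hx
    · have hsub : {a : A | ∃ z ∈ XinfL Fb, (∀ i < n, z.1 i = x.1 i) ∧ z.1 n = some a} ⊆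
          {a : A | ∃ z ∈ Λ, (∀ i < n, z.1 i = x.1 i) ∧ z.1 n = some a} := by
        rintro a ⟨z, hz, hag, hzn⟩
        exact ⟨z, hXinf_sub hz, hag, hzn⟩
      have hcl := mem_closure_of_ext hn (Set.Infinite.mono hsub hS)
      rwa [hΛ.1.closure_eq] at hcl

end FullShift
namespace FullShift

variable {A : Type*}

lemma reverse_dir (Fb : Set (List A)) : IsShiftSpace (XL Fb) := by
  classical
  refine ⟨?_, ?_, ?_⟩
  · -- closed
    apply isClosed_of_closure_subset
    intro y hy
    rw [mem_closure_iff'] at hy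
    rcases len_cases y with ⟨n, hn⟩ | hinf
    · refine Or.inr ⟨n, hn, ?_⟩
      by_contra hfin
      rw [Set.not_infinite] at hfin
      obtain ⟨u, hul, hu⟩ := exists_prefix_list y n (len_eq_coe_iff.1 hn).2
      have hyc : y ∈ Cyl u hfin.toFinset := by
        refine ⟨fun i hi => (hu i (hul ▸ hi)).symm, fun a _ hc => ?_⟩
        rw [hul, (len_eq_coe_iff.1 hn).1] at hc
        cases hc
      obtain ⟨z, hz, hzc⟩ := hy u hfin.toFinset hyc
      have hzy : ∀ i < n, z.1 i = y.1 i := fun i hi => by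
        rw [hzc.1 i (hul ▸ hi), hu i hi]
      have hzF : ∀ a : A, z.1 n = some a → a ∉ hfin.toFinset := by
        intro a ha hmem
        refine hzc.2 a hmem ?_
        rw [hul]
        exact ha
      rcases hz with hz | ⟨m, hm, hSz⟩
      · obtain ⟨c, hc⟩ := Option.ne_none_iff_exists'.1 (hz.1 n)
        exact hzF c hc (hfin.mem_toFinset.2 ⟨z, hz, hzy, hc⟩)
      · have hmn : n ≤ m := by
          by_contra h
          push_neg at h
          have h1 := (len_eq_coe_iff.1 hm).1
          rw [hzy m h] at h1
          exact (len_eq_coe_iff.1 hn).2 m h h1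
        rcases eq_or_lt_of_le hmn with heq | hlt
        · subst heq
          have hsub : {a : A | ∃ z' ∈ XinfL Fb, (∀ i < n, z'.1 i = z.1 i) ∧ z'.1 n = some a} ⊆
              {a : A | ∃ z' ∈ XinfL Fb, (∀ i < n, z'.1 i = y.1 i) ∧ z'.1 n = some a} := by
            rintro a ⟨z', hz', hag, h⟩
            exact ⟨z', hz', fun i hi => (hag i hi).trans (hzy i hi), h⟩
          exact Set.Infinite.mono hsub hSz hfin
        · have hzb := (len_eq_coe_iff.1 hm).2 n hlt
          obtain ⟨b, hb⟩ := Option.ne_none_iff_exists'.1 hzb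
          obtain ⟨a', z', hz', hag, _⟩ := hSz.nonempty
          have hbS : b ∈ {a : A | ∃ z' ∈ XinfL Fb, (∀ i < n, z'.1 i = y.1 i) ∧ z'.1 n = some a} :=
            ⟨z', hz', fun i hi => (hag i (by omega)).trans (hzy i hi), (hag n hlt).trans hb⟩
          exact hzF b hb (hfin.mem_toFinset.2 hbS)
    · refine Or.inl ⟨hinf, fun u hu hocc => ?_⟩
      obtain ⟨i, hi⟩ := hocc
      obtain ⟨w, hwl, hw⟩ := exists_prefix_list y (i + u.length) (fun j _ => hinf j)
      obtain ⟨z, hz, hzc⟩ := hy w ∅ ⟨fun j hj => (hw j (hwl ▸ hj)).symm, by simp⟩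
      have hzy : ∀ j < i + u.length, z.1 j = y.1 j := fun j hj => by
        rw [hzc.1 j (hwl ▸ hj), hw j hj]
      have hoccz : ∀ z'' : FullShift A, (∀ j < i + u.length, z''.1 j = y.1 j) → Occurs u z'' :=
        fun z'' h => ⟨i, fun j hj => by rw [h (i + j) (by omega)]; exact hi j hj⟩
      rcases hz with hz | ⟨m, hm, hSz⟩
      · exact hz.2 u hu (hoccz z hzy)
      · have hmL : i + u.length ≤ m := by
          by_contra h
          push_neg at h
          have h1 := (len_eq_coe_iff.1 hm).1
          rw [hzy m h] at h1
          exact hinf m h1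
        obtain ⟨a', z', hz', hag, _⟩ := hSz.nonempty
        exact hz'.2 u hu (hoccz z' (fun j hj => (hag j (by omega)).trans (hzy j hj)))
  · -- shift invariant
    rintro x (hx | ⟨n, hn, hS⟩)
    · exact Or.inl (shift_mem_XinfL hx)
    · cases n with
      | zero =>
        refine Or.inr ⟨0, ?_, Set.Infinite.mono ?_ hS⟩
        · refine len_eq_coe_of ?_ (fun k hk => absurd hk (Nat.not_lt_zero k))
          show x.1 1 = none
          exact x.2 0 1 (by omega) (len_eq_coe_iff.1 hn).1
        · rintro a ⟨z, hz, _, h0⟩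
          exact ⟨z, hz, fun i hi => absurd hi (Nat.not_lt_zero i), h0⟩
      | succ n =>
        refine Or.inr ⟨n, ?_, Set.Infinite.mono ?_ hS⟩
        · refine len_eq_coe_of ?_ ?_
          · show x.1 (n + 1) = none
            exact (len_eq_coe_iff.1 hn).1
          · intro k hk
            show x.1 (k + 1) ≠ none
            exact (len_eq_coe_iff.1 hn).2 (k + 1) (by omega)
        · rintro a ⟨z, hz, hag, hzn⟩
          refine ⟨shift z, shift_mem_XinfL hz, fun i hi => ?_, ?_⟩
          · show z.1 (i + 1) = x.1 (i + 1)
            exact hag (i + 1) (by omega)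
          · show z.1 (n + 1) = some a
            exact hzn
  · -- extension
    rintro x (hx | ⟨n', hn', hS⟩) n hn
    · exact absurd (len_eq_coe_iff.1 hn).1 (hx.1 n)
    · have hnn : n' = n := by
        have := hn'.symm.trans hn
        exact_mod_cast this
      subst hnn
      refine Set.Infinite.mono ?_ hS
      rintro a ⟨z, hz, hag, hzn⟩
      exact ⟨z, Or.inl hz, hag, hzn⟩

end FullShift

/-- `Λ` is a shift space iff `Λ = X_F` for some set of forbidden
(nonempty) finite words `F`. -/
theorem stmt6 {A : Type*} [Infinite A] (Λ : Set (FullShift A)) :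
    FullShift.IsShiftSpace Λ ↔
      ∃ Fb : Set (List A), (∀ u ∈ Fb, u ≠ []) ∧ Λ = FullShift.XL Fb := by
  constructor
  · exact FullShift.forward_dir
  · rintro ⟨Fb, -, rfl⟩
    exact FullShift.reverse_dir Fb
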